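/- For a finite set D of naturals with minimum d₋ and maximum d₊ and |D| ≥ 2, the map x ↦ x·Δ'(x)/Δ(x) is a bijection from [0, ∞) onto [d₋, d₊), where Δ(x) = ∑_{d ∈ D} x^d/d!. In particular, for every real λ with d₋ < λ < d₊ there is a unique χ > 0 with χ·Δ'(χ)/Δ(χ) = λ. -/

import Mathlib

open scoped BigOperators

/-- `Δ(x) = ∑_{d ∈ D} x^d / d!` -/
noncomputable def Delta (D : Finset ℕ) (x : ℝ) : ℝ :=
  ∑ d ∈ D, x ^ d / (Nat.factorial d)

namespace S1

variable (D : Finset ℕ) (m M : ℕ)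

noncomputable def AA (x : ℝ) : ℝ := ∑ d ∈ D, (d : ℝ) * x ^ (d - m) / (Nat.factorial d)
noncomputable def BB (x : ℝ) : ℝ := ∑ d ∈ D, x ^ (d - m) / (Nat.factorial d)
noncomputable def gg (x : ℝ) : ℝ := AA D m x / BB D m x

lemma BB_pos (hmD : m ∈ D) {x : ℝ} (hx : 0 ≤ x) : 0 < BB D m x := by
  apply Finset.sum_pos'
  · intro d _; positivity
  · refine ⟨m, hmD, ?_⟩
    simp only [Nat.sub_self, pow_zero]
    positivity

lemma hasDerivAt_BB (x : ℝ) :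
    HasDerivAt (BB D m)
      (∑ d ∈ D, ((d - m : ℕ) : ℝ) * x ^ (d - m - 1) / (Nat.factorial d)) x := by
  apply HasDerivAt.fun_sum
  intro d _
  exact (hasDerivAt_pow (d - m) x).div_const _

lemma hasDerivAt_AA (x : ℝ) :
    HasDerivAt (AA D m)
      (∑ d ∈ D, (d : ℝ) * (((d - m : ℕ) : ℝ) * x ^ (d - m - 1)) / (Nat.factorial d)) x := by
  apply HasDerivAt.fun_sum
  intro d _
  exact (((hasDerivAt_pow (d - m) x).const_mul (d : ℝ)).div_const _)

lemma key_pos (hD : 2 ≤ D.card) (hm : ∀ d ∈ D, m ≤ d) {x : ℝ} (hx : 0 < x) :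
    0 < (∑ d ∈ D, (d : ℝ) * (((d - m : ℕ) : ℝ) * x ^ (d - m - 1)) / (Nat.factorial d))
          * (∑ d ∈ D, x ^ (d - m) / (Nat.factorial d))
        - (∑ d ∈ D, (d : ℝ) * x ^ (d - m) / (Nat.factorial d))
          * (∑ d ∈ D, ((d - m : ℕ) : ℝ) * x ^ (d - m - 1) / (Nat.factorial d)) := by
  set t : ℕ → ℝ := fun d => x ^ (d - m) / (Nat.factorial d) with ht
  have htpos : ∀ d, 0 < t d := fun d => by simp only [ht]; positivity
  have hpow : ∀ d ∈ D, (((d - m : ℕ) : ℝ) * x ^ (d - m - 1)) * x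
      = ((d : ℝ) - (m : ℝ)) * x ^ (d - m) := by
    intro d hd
    rcases Nat.eq_zero_or_pos (d - m) with h | h
    · have hdm : d = m := le_antisymm (Nat.sub_eq_zero_iff_le.mp h) (hm d hd)
      subst hdm; simp [h]
    · have h1 : d - m - 1 + 1 = d - m := Nat.succ_pred_eq_of_pos h
      rw [Nat.cast_sub (hm d hd), mul_assoc, ← pow_succ, h1]
  set P := (∑ d ∈ D, (d : ℝ) * (((d - m : ℕ) : ℝ) * x ^ (d - m - 1)) / (Nat.factorial d))
  set Q := (∑ d ∈ D, ((d - m : ℕ) : ℝ) * x ^ (d - m - 1) / (Nat.factorial d))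
  set A := (∑ d ∈ D, (d : ℝ) * x ^ (d - m) / (Nat.factorial d)) with hA
  set B := (∑ d ∈ D, x ^ (d - m) / (Nat.factorial d)) with hB
  have hxP : P * x = ∑ d ∈ D, (d : ℝ) * ((d : ℝ) - (m : ℝ)) * t d := by
    rw [Finset.sum_mul]
    refine Finset.sum_congr rfl fun d hd => ?_
    have := hpow d hd
    simp only [ht]
    field_simp
    nlinarith [this]
  have hxQ : Q * x = ∑ d ∈ D, ((d : ℝ) - (m : ℝ)) * t d := by
    rw [Finset.sum_mul]
    refine Finset.sum_congr rfl fun d hd => ?_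
    have := hpow d hd
    simp only [ht]
    field_simp
    nlinarith [this]
  have hAt : A = ∑ d ∈ D, (d : ℝ) * t d := by
    refine Finset.sum_congr rfl fun d hd => ?_
    simp only [ht]; ring
  have hBt : B = ∑ d ∈ D, t d := rfl
  set S := ∑ d ∈ D, ∑ e ∈ D, (d : ℝ) * ((d : ℝ) - (e : ℝ)) * (t d * t e) with hS
  have hmain : (P * B - A * Q) * x = S := by
    have : (P * B - A * Q) * x = (P * x) * B - A * (Q * x) := by ring
    rw [this, hxP, hxQ, hAt, hBt, Finset.sum_mul_sum, Finset.sum_mul_sum, hS,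
      ← Finset.sum_sub_distrib]
    refine Finset.sum_congr rfl fun d _ => ?_
    rw [← Finset.sum_sub_distrib]
    refine Finset.sum_congr rfl fun e _ => ?_
    ring
  have hswap : S = ∑ d ∈ D, ∑ e ∈ D, (e : ℝ) * ((e : ℝ) - (d : ℝ)) * (t d * t e) := by
    rw [hS, Finset.sum_comm]
    refine Finset.sum_congr rfl fun d _ => Finset.sum_congr rfl fun e _ => by ring
  have h2S : S + S = ∑ d ∈ D, ∑ e ∈ D, ((d : ℝ) - (e : ℝ)) ^ 2 * (t d * t e) := by
    nth_rewrite 1 [hS]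
    nth_rewrite 1 [hswap]
    rw [← Finset.sum_add_distrib]
    refine Finset.sum_congr rfl fun d _ => ?_
    rw [← Finset.sum_add_distrib]
    refine Finset.sum_congr rfl fun e _ => by ring
  obtain ⟨a, ha, b, hb, hab⟩ := Finset.one_lt_card.mp hD
  have hposS : 0 < S + S := by
    rw [h2S]
    apply Finset.sum_pos'
    · intro d _
      apply Finset.sum_nonneg
      intro e _
      positivity
    · refine ⟨a, ha, Finset.sum_pos' (fun e _ => by positivity) ⟨b, hb, ?_⟩⟩
      have hne : (a : ℝ) - (b : ℝ) ≠ 0 := sub_ne_zero.mpr (Nat.cast_injective.ne hab)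
      have h1 : 0 < ((a : ℝ) - (b : ℝ)) ^ 2 := pow_pos (abs_pos.mpr hne) 2 |>.trans_le (by
        rw [sq_abs])
      exact mul_pos h1 (mul_pos (htpos a) (htpos b))
  have hSpos : 0 < S := by linarith
  nlinarith [hmain, hSpos, hx]

lemma gg_zero (hm : ∀ d ∈ D, m ≤ d) (hmD : m ∈ D) : gg D m 0 = m := by
  have hA : AA D m 0 = (m : ℝ) / (Nat.factorial m) := by
    rw [AA, Finset.sum_eq_single_of_mem m hmD]
    · simp
    · intro d hd hdm
      have : d - m ≠ 0 := Nat.sub_ne_zero_of_lt (lt_of_le_of_ne (hm d hd) (Ne.symm hdm))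
      simp [zero_pow this]
  have hB : BB D m 0 = 1 / (Nat.factorial m) := by
    rw [BB, Finset.sum_eq_single_of_mem m hmD]
    · simp
    · intro d hd hdm
      have : d - m ≠ 0 := Nat.sub_ne_zero_of_lt (lt_of_le_of_ne (hm d hd) (Ne.symm hdm))
      simp [zero_pow this]
  have hfac : ((Nat.factorial m : ℝ)) ≠ 0 := by positivity
  rw [gg, hA, hB]
  field_simp

lemma delta_eq (hm : ∀ d ∈ D, m ≤ d) (x : ℝ) : Delta D x = x ^ m * BB D m x := by
  rw [Delta, BB, Finset.mul_sum]
  refine Finset.sum_congr rfl fun d hd => ?_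
  rw [← mul_div_assoc, ← pow_add, Nat.add_sub_cancel' (hm d hd)]

lemma xderiv_eq (hm : ∀ d ∈ D, m ≤ d) (x : ℝ) :
    x * deriv (Delta D) x = x ^ m * AA D m x := by
  have hdd : deriv (Delta D) x = ∑ d ∈ D, (d : ℝ) * x ^ (d - 1) / (Nat.factorial d) := by
    refine HasDerivAt.deriv ?_
    apply HasDerivAt.fun_sum
    intro d _
    exact (hasDerivAt_pow d x).div_const _
  rw [hdd, AA, Finset.mul_sum, Finset.mul_sum]
  refine Finset.sum_congr rfl fun d hd => ?_
  rcases Nat.eq_zero_or_pos d with h | h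
  · subst h; simp
  · have h1 : d - 1 + 1 = d := Nat.succ_pred_eq_of_pos h
    have h2 : m + (d - m) = d := Nat.add_sub_cancel' (hm d hd)
    have e1 : x * x ^ (d - 1) = x ^ d := by rw [← pow_succ', h1]
    have e2 : x ^ m * x ^ (d - m) = x ^ d := by rw [← pow_add, h2]
    calc x * ((d:ℝ) * x ^ (d-1) / (Nat.factorial d))
        = (x * x ^ (d-1)) * (d:ℝ) / (Nat.factorial d) := by ring
      _ = x ^ d * (d:ℝ) / (Nat.factorial d) := by rw [e1]
      _ = (x ^ m * x ^ (d - m)) * (d:ℝ) / (Nat.factorial d) := by rw [e2]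
      _ = x ^ m * ((d:ℝ) * x ^ (d-m) / (Nat.factorial d)) := by ring

lemma F_eq_gg (hm : ∀ d ∈ D, m ≤ d) {x : ℝ} (hx : 0 < x) :
    x * deriv (Delta D) x / Delta D x = gg D m x := by
  rw [xderiv_eq D m hm x, delta_eq D m hm x, gg,
    mul_div_mul_left _ _ (pow_ne_zero m hx.ne')]

lemma continuousOn_gg (hmD : m ∈ D) : ContinuousOn (gg D m) (Set.Ici 0) := by
  have hA : Continuous (AA D m) := by
    apply continuous_finset_sum
    intro d _
    continuity
  have hB : Continuous (BB D m) := by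
    apply continuous_finset_sum
    intro d _
    continuity
  exact hA.continuousOn.div hB.continuousOn
    (fun x hx => (BB_pos D m hmD hx).ne')

lemma strictMonoOn_gg (hD : 2 ≤ D.card) (hm : ∀ d ∈ D, m ≤ d) (hmD : m ∈ D) :
    StrictMonoOn (gg D m) (Set.Ici 0) := by
  apply strictMonoOn_of_deriv_pos (convex_Ici 0) (continuousOn_gg D m hmD)
  intro x hx
  rw [interior_Ici] at hx
  have hB := BB_pos D m hmD hx.le
  have hder : HasDerivAt (gg D m)
      (((∑ d ∈ D, (d : ℝ) * (((d - m : ℕ) : ℝ) * x ^ (d - m - 1)) / (Nat.factorial d))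
          * BB D m x
        - AA D m x
          * (∑ d ∈ D, ((d - m : ℕ) : ℝ) * x ^ (d - m - 1) / (Nat.factorial d)))
        / (BB D m x) ^ 2) x :=
    (hasDerivAt_AA D m x).div (hasDerivAt_BB D m x) hB.ne'
  rw [hder.deriv]
  exact div_pos (key_pos D m hD hm hx) (pow_pos hB 2)

lemma mapsTo_gg (hm : ∀ d ∈ D, m ≤ d) (hmD : m ∈ D) (hM : ∀ d ∈ D, d ≤ M)
    (hmM : m < M) {x : ℝ} (hx : 0 ≤ x) :
    gg D m x ∈ Set.Ico (m : ℝ) (M : ℝ) := by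
  have hB := BB_pos D m hmD hx
  constructor
  · rw [gg, le_div_iff₀ hB, BB, Finset.mul_sum, AA]
    apply Finset.sum_le_sum
    intro d hd
    have h1 : (m : ℝ) ≤ d := Nat.cast_le.mpr (hm d hd)
    have h2 : (0:ℝ) ≤ x ^ (d - m) / (Nat.factorial d) := by positivity
    calc (m:ℝ) * (x ^ (d-m) / (Nat.factorial d))
        ≤ (d:ℝ) * (x ^ (d-m) / (Nat.factorial d)) := mul_le_mul_of_nonneg_right h1 h2
      _ = (d:ℝ) * x ^ (d-m) / (Nat.factorial d) := by ring
  · rw [gg, div_lt_iff₀ hB, AA, BB, Finset.mul_sum]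
    apply Finset.sum_lt_sum
    · intro d hd
      have h1 : (d : ℝ) ≤ M := Nat.cast_le.mpr (hM d hd)
      have h2 : (0:ℝ) ≤ x ^ (d - m) / (Nat.factorial d) := by positivity
      calc (d:ℝ) * x ^ (d-m) / (Nat.factorial d)
          = (d:ℝ) * (x ^ (d-m) / (Nat.factorial d)) := by ring
        _ ≤ (M:ℝ) * (x ^ (d-m) / (Nat.factorial d)) := mul_le_mul_of_nonneg_right h1 h2
    · refine ⟨m, hmD, ?_⟩
      have h3 : (m:ℝ) < M := Nat.cast_lt.mpr hmM
      have h4 : (0:ℝ) < x ^ (m - m) / (Nat.factorial m) := by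
        simp only [Nat.sub_self, pow_zero]; positivity
      calc (m:ℝ) * x ^ (m-m) / (Nat.factorial m)
          = (m:ℝ) * (x ^ (m-m) / (Nat.factorial m)) := by ring
        _ < (M:ℝ) * (x ^ (m-m) / (Nat.factorial m)) :=
            mul_lt_mul_of_pos_right h3 h4

lemma exists_gg_gt (hm : ∀ d ∈ D, m ≤ d) (hmD : m ∈ D) (hM : ∀ d ∈ D, d ≤ M)
    (hMD : M ∈ D) {lam : ℝ} (hlam : lam < M) :
    ∃ b : ℝ, 1 ≤ b ∧ lam < gg D m b := by
  set φ : ℝ → ℝ := fun b => (AA D m b - lam * BB D m b) / b ^ (M - m) with hφdef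
  have hφ : ∀ b : ℝ, φ b
      = ∑ d ∈ D, ((d : ℝ) - lam) / (Nat.factorial d) * (b ^ (d - m) / b ^ (M - m)) := by
    intro b
    rw [hφdef]
    simp only [AA, BB, Finset.mul_sum, ← Finset.sum_sub_distrib, Finset.sum_div]
    refine Finset.sum_congr rfl fun d _ => by ring
  have hL : (0:ℝ) < ((M : ℝ) - lam) / (Nat.factorial M) := by
    have : (0:ℝ) < (M:ℝ) - lam := by linarith
    positivity
  have htd : Filter.Tendsto φ Filter.atTop (nhds (((M : ℝ) - lam) / (Nat.factorial M))) := by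
    have hsum : Filter.Tendsto
        (fun b : ℝ => ∑ d ∈ D, ((d : ℝ) - lam) / (Nat.factorial d) * (b ^ (d - m) / b ^ (M - m)))
        Filter.atTop
        (nhds (∑ d ∈ D, if d = M then ((M : ℝ) - lam) / (Nat.factorial M) else 0)) := by
      apply tendsto_finset_sum
      intro d hd
      by_cases hdM : d = M
      · subst hdM
        simp only [if_pos rfl]
        have hev : ∀ᶠ b : ℝ in Filter.atTop,
            ((d : ℝ) - lam) / (Nat.factorial d) * (b ^ (d - m) / b ^ (d - m))
              = ((d : ℝ) - lam) / (Nat.factorial d) := by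
          filter_upwards [Filter.eventually_ge_atTop (1:ℝ)] with b hb
          have hb0 : b ≠ 0 := by positivity
          rw [div_self (pow_ne_zero _ hb0), mul_one]
        exact Filter.Tendsto.congr' (hev.mono fun _ hb => hb.symm) tendsto_const_nhds
      · simp only [if_neg hdM]
        have hlt : d - m < M - m :=
          Nat.sub_lt_sub_right (hm d hd) (lt_of_le_of_ne (hM d hd) hdM)
        have := (tendsto_pow_div_pow_atTop_zero (𝕜 := ℝ) hlt).const_mul
          (((d : ℝ) - lam) / (Nat.factorial d))
        simpa using this
    have hval : (∑ d ∈ D, if d = M then ((M : ℝ) - lam) / (Nat.factorial M) else 0)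
        = ((M : ℝ) - lam) / (Nat.factorial M) := by
      rw [Finset.sum_ite_eq' D M (fun _ => ((M : ℝ) - lam) / (Nat.factorial M)), if_pos hMD]
    rw [← hval]
    exact Filter.Tendsto.congr (fun b => (hφ b).symm) hsum
  have hev2 : ∀ᶠ b : ℝ in Filter.atTop, 0 < φ b := htd.eventually (lt_mem_nhds hL)
  obtain ⟨b, hb1, hbpos⟩ := ((Filter.eventually_ge_atTop (1:ℝ)).and hev2).exists
  have hb0 : (0:ℝ) < b := lt_of_lt_of_le one_pos hb1
  have hnum : 0 < AA D m b - lam * BB D m b := by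
    have hp : (0:ℝ) < b ^ (M - m) := pow_pos hb0 _
    rw [hφdef, div_pos_iff] at hbpos
    rcases hbpos with ⟨h, _⟩ | ⟨_, h⟩
    · exact h
    · linarith
  refine ⟨b, hb1, ?_⟩
  rw [gg, lt_div_iff₀ (BB_pos D m hmD hb0.le)]
  linarith

end S1

/-- for a finite set `D` of naturals with `|D| ≥ 2`, minimum `d₋` and
maximum `d₊`, the map `x ↦ x·Δ'(x)/Δ(x)` (interpreted as `d₋` at `x = 0`) is a bijection
from `[0, ∞)` onto `[d₋, d₊)`; in particular for every `λ` with `d₋ < λ < d₊` there is a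
unique `χ > 0` with `χ·Δ'(χ)/Δ(χ) = λ`. -/
theorem stmt_1 (D : Finset ℕ) (hD : 2 ≤ D.card) (hne : D.Nonempty) :
    Set.BijOn
      (fun x : ℝ => if x = 0 then (D.min' hne : ℝ)
        else x * deriv (Delta D) x / Delta D x)
      (Set.Ici 0) (Set.Ico (D.min' hne : ℝ) (D.max' hne : ℝ)) ∧
    ∀ lam : ℝ, (D.min' hne : ℝ) < lam → lam < (D.max' hne : ℝ) →
      ∃! chi : ℝ, 0 < chi ∧ chi * deriv (Delta D) chi / Delta D chi = lam := by
  set m := D.min' hne with hmdef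
  set M := D.max' hne with hMdef
  have hm : ∀ d ∈ D, m ≤ d := fun d hd => D.min'_le d hd
  have hM : ∀ d ∈ D, d ≤ M := fun d hd => D.le_max' d hd
  have hmD : m ∈ D := D.min'_mem hne
  have hMD : M ∈ D := D.max'_mem hne
  have hmM : m < M := D.min'_lt_max'_of_card (by omega)
  have hEq : Set.EqOn (S1.gg D m)
      (fun x : ℝ => if x = 0 then (m : ℝ) else x * deriv (Delta D) x / Delta D x)
      (Set.Ici 0) := by
    intro x hx
    by_cases hx0 : x = 0
    · subst hx0
      simp only [if_pos rfl]
      exact S1.gg_zero D m hm hmD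
    · have hxpos : 0 < x := lt_of_le_of_ne hx (Ne.symm hx0)
      simp only [if_neg hx0]
      exact (S1.F_eq_gg D m hm hxpos).symm
  have hmono := S1.strictMonoOn_gg D m hD hm hmD
  have hsurj : Set.SurjOn (S1.gg D m) (Set.Ici 0) (Set.Ico (m : ℝ) (M : ℝ)) := by
    intro lam hlam
    obtain ⟨b, hb1, hbgt⟩ := S1.exists_gg_gt D m M hm hmD hM hMD hlam.2
    have h0b : (0:ℝ) ≤ b := by linarith
    have hcont := (S1.continuousOn_gg D m hmD).mono
      (fun y hy => hy.1 : Set.Icc (0:ℝ) b ⊆ Set.Ici 0)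
    have hlam' : lam ∈ Set.Icc (S1.gg D m 0) (S1.gg D m b) := by
      rw [S1.gg_zero D m hm hmD]
      exact ⟨hlam.1, hbgt.le⟩
    obtain ⟨x, hx, hgx⟩ := intermediate_value_Icc h0b hcont hlam'
    exact ⟨x, hx.1, hgx⟩
  have hbij : Set.BijOn (S1.gg D m) (Set.Ici 0) (Set.Ico (m : ℝ) (M : ℝ)) :=
    ⟨fun x hx => S1.mapsTo_gg D m M hm hmD hM hmM hx, hmono.injOn, hsurj⟩
  constructor
  · exact hbij.congr hEq
  · intro lam h1 h2
    obtain ⟨x, hx, hgx⟩ := hsurj ⟨h1.le, h2⟩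
    have hx0 : x ≠ 0 := by
      rintro rfl
      rw [S1.gg_zero D m hm hmD] at hgx
      exact absurd hgx (ne_of_lt h1)
    have hxpos : 0 < x := lt_of_le_of_ne hx (Ne.symm hx0)
    refine ⟨x, ⟨hxpos, ?_⟩, ?_⟩
    · rw [S1.F_eq_gg D m hm hxpos]
      exact hgx
    · rintro y ⟨hy, hyeq⟩
      apply hmono.injOn (Set.mem_Ici.mpr hy.le) (Set.mem_Ici.mpr hx)
      have hgy : S1.gg D m y = lam := by
        rw [← S1.F_eq_gg D m hm hy]; exact hyeq
      rw [hgy, hgx]
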